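/- Fix integers m, n with 2 < m ≤ n. Then the double sum over pairs (i,j) with 1 ≤ i ≤ m, 1 ≤ j ≤ n, (i,j) ≠ (m,n), of C(m+n−i−j, m−i) multiplied by the 2×2 determinant with rows [C(i+n−2, i−1), C(m+j−2, m−1)] and [C(i+n−3, i−2), C(m+j−3, m−2)], equals C(m+n−2, m−1)². -/

import Mathlib

/-- Generalized binomial coefficient `C(s,a)` for integers `s, a`:
`C(s,a) = s(s-1)⋯(s-a+1)/a!` if `a ≥ 0`, and `0` if `a < 0`. -/
noncomputable def C (s a : ℤ) : ℚ :=
  if a < 0 then 0 else (∏ i ∈ Finset.range a.toNat, ((s : ℚ) - i)) / (a.toNat.factorial : ℚ)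

open Finset

lemma C_neg {s a : ℤ} (h : a < 0) : C s a = 0 := if_pos h

lemma prod_cast (s a : ℕ) : (∏ i ∈ range a, ((s:ℚ) - i)) = (s.descFactorial a : ℚ) := by
  induction a with
  | zero => simp
  | succ a ih =>
    rw [prod_range_succ, ih, Nat.descFactorial_succ]
    rcases le_or_gt a s with h | h
    · rw [Nat.cast_mul, Nat.cast_sub h]; ring
    · have h1 : s.descFactorial a = 0 := Nat.descFactorial_eq_zero_iff_lt.mpr h
      have h2 : s.descFactorial (a+1) = 0 := Nat.descFactorial_eq_zero_iff_lt.mpr (by omega)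
      simp [h1]

lemma C_nat (s a : ℕ) : C (s:ℤ) (a:ℤ) = (s.choose a : ℚ) := by
  unfold C
  rw [if_neg (by exact_mod_cast Nat.not_lt_zero a ∘ (by exact_mod_cast ·))]
  simp only [Int.toNat_natCast, Int.cast_natCast]
  rw [prod_cast, Nat.descFactorial_eq_factorial_mul_choose]
  rw [Nat.cast_mul]
  rw [mul_comm, mul_div_assoc, div_self (by exact_mod_cast a.factorial_ne_zero), mul_one]

lemma C_int {s a : ℤ} (hs : 0 ≤ s) (ha : 0 ≤ a) : C s a = (s.toNat.choose a.toNat : ℚ) := by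
  have := C_nat s.toNat a.toNat
  rwa [Int.toNat_of_nonneg hs, Int.toNat_of_nonneg ha] at this

lemma hockey (b : ℕ) : ∀ N : ℕ, ∑ q ∈ range (N+1), (b+q).choose q = (b+N+1).choose N := by
  intro N
  induction N with
  | zero => simp
  | succ N ih =>
    rw [sum_range_succ, ih]
    exact (Nat.choose_succ_succ (b+N+1) N).symm

lemma conv : ∀ (a N b : ℕ), ∑ k ∈ range (N+1), (a+k).choose k * ((b+(N-k)).choose (N-k)) = (a+b+N+1).choose N := by
  intro a
  induction a with
  | zero =>
    intro N b
    have e1 : ∀ k ∈ range (N+1), (0+k).choose k * ((b+(N-k)).choose (N-k))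
        = (fun q => (b+q).choose q) (N - k) := by
      intro k _
      simp [Nat.zero_add]
    rw [sum_congr rfl e1]
    have e2 := Finset.sum_range_reflect (fun q => (b+q).choose q) (N+1)
    simp only [Nat.add_sub_cancel] at e2
    rw [e2, hockey, Nat.zero_add]
  | succ a iha =>
    intro N b
    induction N with
    | zero => simp
    | succ N ihN =>
      rw [Finset.sum_range_succ']
      have step : ∀ k ∈ range (N+1),
          (a+1+(k+1)).choose (k+1) * ((b+(N+1-(k+1))).choose (N+1-(k+1)))
          = (a+1+k).choose k * ((b+(N-k)).choose (N-k))
            + (a+(k+1)).choose (k+1) * ((b+(N+1-(k+1))).choose (N+1-(k+1))) := by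
        intro k hk
        have h2 : N+1-(k+1) = N-k := by omega
        have h1 : a+1+(k+1) = (a+(k+1))+1 := by ring
        have h3 : a + (k+1) = a+1+k := by ring
        rw [h1, Nat.choose_succ_succ, h2, add_mul, h3]
      rw [Finset.sum_congr rfl step, Finset.sum_add_distrib, ihN]
      have e0 : (a+1+0).choose 0 * ((b+(N+1-0)).choose (N+1-0))
          = (a+0).choose 0 * ((b+(N+1-0)).choose (N+1-0)) := by
        norm_num
      rw [add_assoc, e0, ← Finset.sum_range_succ'
        (fun k => (a+k).choose k * ((b+(N+1-k)).choose (N+1-k))) (N+1), iha (N+1) b]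
      have h4 : a+b+(N+1)+1 = a+1+b+N+1 := by ring
      have h5 : a+1+b+(N+1)+1 = (a+1+b+N+1)+1 := by ring
      rw [h4, h5, Nat.choose_succ_succ (a+1+b+N+1) N]

lemma sum_Icc_int (n : ℤ) (hn : 0 ≤ n) (f : ℤ → ℚ) :
    ∑ j ∈ Icc 1 n, f j = ∑ k ∈ range n.toNat, f (n - k) := by
  apply Finset.sum_nbij' (i := fun j => (n - j).toNat) (j := fun k => n - (k:ℤ))
  · intro a ha; simp only [mem_Icc] at ha; simp only [mem_range]; omega
  · intro b hb; simp only [mem_range] at hb; simp only [mem_Icc]; omega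
  · intro a ha; simp only [mem_Icc] at ha; omega
  · intro b hb; simp only [mem_range] at hb; omega
  · intro a ha; simp only [mem_Icc] at ha
    congr 1; omega

lemma sum_Icc_int' (m : ℤ) (hm : 0 ≤ m) (f : ℤ → ℚ) :
    ∑ i ∈ Icc 1 m, f i = ∑ t ∈ range m.toNat, f (t+1) := by
  refine Finset.sum_nbij' (i := fun j => (j - 1).toNat) (j := fun k => ((k:ℤ) + 1)) ?_ ?_ ?_ ?_ ?_
  · intro a ha; simp only [mem_Icc] at ha; simp only [mem_range]; omega
  · intro b hb; simp only [mem_range] at hb; simp only [mem_Icc]; omega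
  · intro a ha; simp only [mem_Icc] at ha; omega
  · intro b hb; simp only [mem_range] at hb; omega
  · intro a ha; simp only [mem_Icc] at ha
    congr 1; omega

lemma C_inner_sum (n a b : ℤ) (hn : 1 ≤ n) (ha : 0 ≤ a) (hb : 0 ≤ b) :
    ∑ j ∈ Icc (1:ℤ) n, C (a + n - j) a * C (b + j - 1) b = C (a + b + n) (n - 1) := by
  rw [sum_Icc_int n (by omega)]
  set A := a.toNat with hA
  set B := b.toNat with hB
  set N := n.toNat - 1 with hN
  have hNn : n.toNat = N + 1 := by omega
  rw [hNn]
  have key : ∀ k ∈ range (N+1),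
      C (a + n - (n - (k:ℤ))) a * C (b + (n - (k:ℤ)) - 1) b
        = (((A+k).choose k * ((B+(N-k)).choose (N-k)) : ℕ) : ℚ) := by
    intro k hk
    simp only [mem_range] at hk
    have h1 : C (a + n - (n - (k:ℤ))) a = ((A + k).choose k : ℚ) := by
      rw [C_int (by omega) ha]
      have e : (a + n - (n - (k:ℤ))).toNat = A + k := by omega
      rw [e, ← hA, Nat.choose_symm_add]
    have h2 : C (b + (n - (k:ℤ)) - 1) b = ((B + (N-k)).choose (N-k) : ℚ) := by
      rw [C_int (by omega) hb]
      have e : (b + (n - (k:ℤ)) - 1).toNat = B + (N - k) := by omega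
      rw [e, ← hB, Nat.choose_symm_add]
    rw [h1, h2]; push_cast; ring
  rw [Finset.sum_congr rfl key, ← Nat.cast_sum, conv A N B]
  rw [C_int (by omega) (by omega)]
  congr 2 <;> omega

theorem multiplicity_simplification (m n : ℤ) (hm : 2 < m) (hmn : m ≤ n) :
    (∑ i ∈ Finset.Icc (1 : ℤ) m, ∑ j ∈ Finset.Icc (1 : ℤ) n,
      if (i, j) ≠ (m, n) then
        C (m + n - i - j) (m - i) *
          (C (i + n - 2) (i - 1) * C (m + j - 3) (m - 2)
            - C (m + j - 2) (m - 1) * C (i + n - 3) (i - 2))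
      else 0)
      = C (m + n - 2) (m - 1) ^ 2 := by
  have step1 : ∀ i ∈ Icc (1:ℤ) m, ∀ j ∈ Icc (1:ℤ) n,
      (if (i, j) ≠ (m, n) then
        C (m + n - i - j) (m - i) *
          (C (i + n - 2) (i - 1) * C (m + j - 3) (m - 2)
            - C (m + j - 2) (m - 1) * C (i + n - 3) (i - 2))
      else 0)
      = C (m + n - i - j) (m - i) *
          (C (i + n - 2) (i - 1) * C (m + j - 3) (m - 2)
            - C (m + j - 2) (m - 1) * C (i + n - 3) (i - 2)) := by
    intro i _ j _
    split_ifs with h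
    · rfl
    · obtain ⟨h1, h2⟩ := Prod.ext_iff.mp (not_not.mp h)
      subst h1; subst h2
      ring
  rw [Finset.sum_congr rfl (fun i hi => Finset.sum_congr rfl (step1 i hi))]
  have step2 : ∀ i ∈ Icc (1:ℤ) m,
      (∑ j ∈ Icc (1:ℤ) n, C (m+n-i-j) (m-i) *
          (C (i+n-2) (i-1) * C (m+j-3) (m-2) - C (m+j-2) (m-1) * C (i+n-3) (i-2)))
      = C (i+n-2) (i-1) * C ((m-i)+(m-2)+n) (n-1)
        - C (i+n-3) (i-2) * C ((m-i)+(m-1)+n) (n-1) := by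
    intro i hi
    simp only [mem_Icc] at hi
    have e : ∀ j ∈ Icc (1:ℤ) n, C (m+n-i-j) (m-i) *
          (C (i+n-2) (i-1) * C (m+j-3) (m-2) - C (m+j-2) (m-1) * C (i+n-3) (i-2))
        = C (i+n-2) (i-1) * (C ((m-i) + n - j) (m-i) * C ((m-2) + j - 1) (m-2))
          - C (i+n-3) (i-2) * (C ((m-i) + n - j) (m-i) * C ((m-1) + j - 1) (m-1)) := by
      intro j _
      have a1 : m+n-i-j = (m-i)+n-j := by ring
      have a2 : m+j-3 = (m-2)+j-1 := by ring
      have a3 : m+j-2 = (m-1)+j-1 := by ring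
      rw [a1, a2, a3]; ring
    rw [Finset.sum_congr rfl e, Finset.sum_sub_distrib, ← Finset.mul_sum, ← Finset.mul_sum,
        C_inner_sum n (m-i) (m-2) (by omega) (by omega) (by omega),
        C_inner_sum n (m-i) (m-1) (by omega) (by omega) (by omega)]
  rw [Finset.sum_congr rfl step2]
  set F : ℤ → ℚ := fun i => C (i+n-2) (i-1) * C (2*m+n-i-2) (n-1) with hF
  have step3 : ∀ i ∈ Icc (1:ℤ) m,
      C (i+n-2) (i-1) * C ((m-i)+(m-2)+n) (n-1)
        - C (i+n-3) (i-2) * C ((m-i)+(m-1)+n) (n-1)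
      = F i - F (i-1) := by
    intro i _
    rw [hF]; dsimp only
    have a1 : (m-i)+(m-2)+n = 2*m+n-i-2 := by ring
    have a2 : i-1+n-2 = i+n-3 := by ring
    have a3 : i-1-1 = i-2 := by ring
    have a4 : 2*m+n-(i-1)-2 = (m-i)+(m-1)+n := by ring
    rw [a1, a2, a3, a4]
  rw [Finset.sum_congr rfl step3, sum_Icc_int' m (by omega)]
  have e5 : ∀ t ∈ range m.toNat, F ((t:ℤ)+1) - F ((t:ℤ)+1-1)
      = (fun s : ℕ => F s) (t+1) - (fun s : ℕ => F s) t := by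
    intro t _
    dsimp only
    rw [show (((t+1:ℕ)):ℤ) = (t:ℤ)+1 by push_cast; ring,
        show (t:ℤ)+1-1 = (t:ℤ) by ring]
  rw [Finset.sum_congr rfl e5, Finset.sum_range_sub (fun s : ℕ => F s) m.toNat]
  rw [show ((m.toNat : ℤ)) = m from Int.toNat_of_nonneg (by omega)]
  rw [hF]; dsimp only
  rw [show ((0:ℕ):ℤ) = (0:ℤ) from rfl]
  rw [C_neg (show (0:ℤ)-1 < 0 by omega)]
  have a5 : 2*m+n-m-2 = m+n-2 := by ring
  rw [a5]
  have hsymm : C (m+n-2) (n-1) = C (m+n-2) (m-1) := by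
    rw [C_int (by omega) (by omega), C_int (by omega) (by omega)]
    have e1 : (n-1).toNat = (m+n-2).toNat - (m-1).toNat := by omega
    have e2 : (m-1).toNat ≤ (m+n-2).toNat := by omega
    rw [e1, Nat.choose_symm e2]
  rw [hsymm]
  ring
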